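/- For all real λ > 0, β > 0, t ≥ 0 and every real θ > -λ, ∫₀^∞ e^{-θ u} · λ e^{-λ u - β t} · I₀(2√(λ β u t)) du = (λ/(θ+λ)) · exp(-β t θ/(θ+λ)). -/

import Mathlib

open Real MeasureTheory Filter Finset

/-- Wright function `Φ(ρ, δ, z) = Σ_{j≥0} z^j / (j! Γ(ρ j + δ))`. -/
noncomputable def wright (ρ δ z : ℝ) : ℝ :=
  ∑' j : ℕ, z ^ j / ((Nat.factorial j : ℝ) * Real.Gamma (ρ * (j : ℝ) + δ))

/-- Wright function with second parameter 0:
`Φ(ρ, 0, z) = Σ_{j≥1} z^j / (j! Γ(ρ j))`. -/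
noncomputable def wright0 (ρ z : ℝ) : ℝ :=
  ∑' j : ℕ, z ^ (j + 1) /
    ((Nat.factorial (j + 1) : ℝ) * Real.Gamma (ρ * ((j : ℝ) + 1)))

/-- Two-parameter Mittag-Leffler function `E_{ρ,δ}(z) = Σ_{j≥0} z^j / Γ(ρ j + δ)`. -/
noncomputable def ml2 (ρ δ z : ℝ) : ℝ :=
  ∑' j : ℕ, z ^ j / Real.Gamma (ρ * (j : ℝ) + δ)

/-- Three-parameter generalized Mittag-Leffler function
`E^γ_{ρ,δ}(z) = Σ_{j≥0} (Γ(γ+j)/Γ(γ)) z^j / (j! Γ(ρ j + δ))`. -/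
noncomputable def ml3 (γ ρ δ z : ℝ) : ℝ :=
  ∑' j : ℕ, (Real.Gamma (γ + (j : ℝ)) / Real.Gamma γ) * z ^ j /
    ((Nat.factorial j : ℝ) * Real.Gamma (ρ * (j : ℝ) + δ))

/-- Modified Bessel function of the first kind of order 0:
`I₀(z) = Σ_{j≥0} (z/2)^{2j} / (j!)²`. -/
noncomputable def besselI0 (z : ℝ) : ℝ :=
  ∑' j : ℕ, (z / 2) ^ (2 * j) / ((Nat.factorial j : ℝ) * (Nat.factorial j : ℝ))

lemma key_int (j : ℕ) {a : ℝ} (ha : 0 < a) :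
    ∫ u in Set.Ioi (0:ℝ), u ^ j * Real.exp (-(a * u)) = (Nat.factorial j : ℝ) / a ^ (j+1) := by
  have h := integral_rpow_mul_exp_neg_mul_Ioi (a := (j:ℝ) + 1) (r := a) (by positivity) ha
  rw [show ((j:ℝ)+1) - 1 = (j:ℝ) by ring] at h
  rw [setIntegral_congr_fun measurableSet_Ioi
    (fun u hu => by rw [← Real.rpow_natCast u j] : ∀ u ∈ Set.Ioi (0:ℝ),
      u ^ j * Real.exp (-(a * u)) = u ^ ((j:ℝ)) * Real.exp (-(a * u))), h,
    Real.Gamma_nat_eq_factorial, show ((j:ℝ)+1) = ((j+1 : ℕ):ℝ) by push_cast; ring,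
    Real.rpow_natCast, one_div, inv_pow]
  field_simp

lemma key_integrable (j : ℕ) {a : ℝ} (ha : 0 < a) :
    IntegrableOn (fun u : ℝ => u ^ j * Real.exp (-(a * u))) (Set.Ioi 0) := by
  have h := integrableOn_rpow_mul_exp_neg_mul_rpow (p := 1) (s := (j:ℝ)) (b := a)
    (lt_of_lt_of_le neg_one_lt_zero (Nat.cast_nonneg j)) one_pos ha
  refine h.congr_fun (fun u hu => ?_) measurableSet_Ioi
  beta_reduce
  rw [Real.rpow_one, Real.rpow_natCast, neg_mul]

lemma besselI0_of_nonneg {x : ℝ} (hx : 0 ≤ x) :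
    besselI0 (2 * Real.sqrt x) =
      ∑' j : ℕ, x ^ j / ((Nat.factorial j : ℝ) * (Nat.factorial j : ℝ)) := by
  unfold besselI0
  congr 1; ext j
  rw [mul_div_cancel_left₀ _ (two_ne_zero), pow_mul, Real.sq_sqrt hx]

/-- Laplace transform of the inverse compound Poisson-exponential
process `Y(t)`. -/
theorem stmt5 (lam β t : ℝ) (hlam : 0 < lam) (hβ : 0 < β) (ht : 0 ≤ t)
    (θ : ℝ) (hθ : -lam < θ) :
    (∫ u in Set.Ioi (0 : ℝ),
      Real.exp (-(θ * u)) *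
        (lam * Real.exp (-(lam * u) - β * t) *
          besselI0 (2 * Real.sqrt (lam * β * u * t))))
    = lam / (θ + lam) * Real.exp (-(β * t * θ / (θ + lam))) := by
  set a : ℝ := θ + lam with ha_def
  have ha : 0 < a := by simp only [ha_def]; linarith
  set c : ℝ := lam * β * t with hc_def
  have hc : 0 ≤ c := by positivity
  set K : ℝ := lam * Real.exp (-(β * t)) with hK_def
  have hK : 0 ≤ K := by positivity
  set g : ℕ → ℝ → ℝ := fun j u =>
    (K * (c ^ j / ((Nat.factorial j : ℝ) * (Nat.factorial j : ℝ)))) *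
      (u ^ j * Real.exp (-(a * u))) with hg_def
  -- pointwise identity on Ioi 0
  have hpt : ∀ u ∈ Set.Ioi (0:ℝ),
      Real.exp (-(θ * u)) * (lam * Real.exp (-(lam * u) - β * t) *
        besselI0 (2 * Real.sqrt (lam * β * u * t))) = ∑' j : ℕ, g j u := by
    intro u hu
    have hu0 : (0:ℝ) ≤ u := le_of_lt hu
    have hx : lam * β * u * t = c * u := by rw [hc_def]; ring
    rw [hx, besselI0_of_nonneg (by positivity), ← mul_assoc, ← tsum_mul_left]
    refine tsum_congr fun j => ?_
    rw [hg_def, hK_def]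
    simp only [mul_pow]
    rw [show -(lam * u) - β * t = -(β * t) + -(lam*u) from by ring, Real.exp_add,
      show -(a*u) = -(θ*u) + -(lam*u) from by rw [ha_def]; ring, Real.exp_add]
    ring
  rw [setIntegral_congr_fun measurableSet_Ioi hpt]
  -- integrability and summability of norms
  have hint : ∀ j : ℕ, Integrable (g j) (volume.restrict (Set.Ioi 0)) := fun j =>
    ((key_integrable j ha).const_mul _)
  have hval : ∀ j : ℕ, ∫ u in Set.Ioi (0:ℝ), g j u =
      (K * (c ^ j / ((Nat.factorial j : ℝ) * (Nat.factorial j : ℝ)))) *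
        ((Nat.factorial j : ℝ) / a ^ (j+1)) := by
    intro j
    rw [hg_def]
    simp only
    rw [MeasureTheory.integral_const_mul, key_int j ha]
  have hval2 : ∀ j : ℕ, ∫ u in Set.Ioi (0:ℝ), g j u =
      (K / a) * ((c / a) ^ j / (Nat.factorial j : ℝ)) := by
    intro j
    rw [hval j, div_pow]
    have hfj : ((Nat.factorial j : ℝ)) ≠ 0 := Nat.cast_ne_zero.2 (Nat.factorial_ne_zero j)
    field_simp
    ring
  have hnorm : ∀ j : ℕ, ∫ u in Set.Ioi (0:ℝ), ‖g j u‖ = ∫ u in Set.Ioi (0:ℝ), g j u := by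
    intro j
    refine setIntegral_congr_fun measurableSet_Ioi (fun u hu => ?_)
    have : 0 ≤ g j u := by
      rw [hg_def]
      have hu0 : (0:ℝ) ≤ u := le_of_lt hu
      positivity
    rw [Real.norm_of_nonneg this]
  have hsum : Summable (fun j : ℕ => ∫ u in Set.Ioi (0:ℝ), ‖g j u‖) := by
    simp_rw [fun j => (hnorm j).trans (hval2 j)]
    exact ((Real.summable_pow_div_factorial (c/a)).mul_left _)
  rw [← MeasureTheory.integral_tsum_of_summable_integral_norm hint hsum]
  simp_rw [fun j => hval2 j]
  rw [tsum_mul_left]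
  have hexp : (∑' j : ℕ, (c/a) ^ j / (Nat.factorial j : ℝ)) = Real.exp (c/a) := by
    rw [Real.exp_eq_exp_ℝ, NormedSpace.exp_eq_tsum_div]
  rw [hexp, hK_def]
  rw [div_mul_eq_mul_div, mul_assoc, ← Real.exp_add]
  have harg : -(β*t) + c/a = -(β * t * θ / (θ + lam)) := by
    rw [hc_def, ha_def]
    have hne : θ + lam ≠ 0 := by linarith
    field_simp
    ring
  rw [harg, ← ha_def]
  ring
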